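/- Decay of a non-quadratic energy (abstract form of Proposition 2.4): Let C₁, C₂, C₃, λ₁ > 0 be constants. Let a, f, g : [0,∞) → ℝ be differentiable and nonnegative, and let d, h : [0,∞) → ℝ be nonnegative, and suppose that for all t ≥ 0: (i) a′(t) + 2 f(t)² ≤ C₁ g(t) d(t); (ii) f′(t) + (1/C₂) d(t) ≤ C₃ f(t); (iii) g′(t) + (1/C₂) g(t) ≤ 0; (iv) 2 g(t) g′(t) + 2 h(t)² ≤ 0; (v) λ₁ g(t)² ≤ h(t)². Then for every ε > 0 there exist constants c₁ > 0 and c₂ > 0, depending only on C₁, C₂, C₃, λ₁ and ε, such that for all t ≥ 0 the function E(t) = a(t) + c₁ f(t) g(t) + c₂ g(t)² satisfies E′(t) + (2 − ε) f(t)² + d(t) g(t) + h(t)² ≤ 0. (In the paper, this is applied with a = ‖u‖²_{L²}, f = ‖∇u‖_{L²}, g = ‖∇Q(u)‖_{L²}, d = ‖Δu‖_{L²}, h = ‖div u‖_{L²} for a solution u of the extended Stokes equations; hypotheses (i)–(iv) are the derived energy inequalities and (v) is the Poincaré inequality.) -/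

import Mathlib

/-- **Decay of a non-quadratic energy** (abstract form of Proposition 2.4).
Given the differential inequalities (i)–(iv) and the Poincaré-type inequality (v),
for every `ε > 0` there are `c₁, c₂ > 0` (depending only on `C₁, C₂, C₃, λ₁, ε`)
such that `E = a + c₁ f g + c₂ g²` satisfies `E′ + (2−ε) f² + d g + h² ≤ 0`. -/
theorem nonquadratic_energy_decay
    (C₁ C₂ C₃ lam₁ : ℝ) (hC₁ : 0 < C₁) (hC₂ : 0 < C₂) (hC₃ : 0 < C₃)
    (hlam : 0 < lam₁) (ε : ℝ) (hε : 0 < ε) :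
    ∃ c₁ > (0:ℝ), ∃ c₂ > (0:ℝ),
      ∀ a a' f f' g g' d h : ℝ → ℝ,
        (∀ t, 0 ≤ t → HasDerivWithinAt a (a' t) (Set.Ici 0) t) →
        (∀ t, 0 ≤ t → HasDerivWithinAt f (f' t) (Set.Ici 0) t) →
        (∀ t, 0 ≤ t → HasDerivWithinAt g (g' t) (Set.Ici 0) t) →
        (∀ t, 0 ≤ t → 0 ≤ a t) → (∀ t, 0 ≤ t → 0 ≤ f t) →
        (∀ t, 0 ≤ t → 0 ≤ g t) → (∀ t, 0 ≤ t → 0 ≤ d t) →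
        (∀ t, 0 ≤ t → 0 ≤ h t) →
        (∀ t, 0 ≤ t → a' t + 2 * f t ^ 2 ≤ C₁ * g t * d t) →
        (∀ t, 0 ≤ t → f' t + (1 / C₂) * d t ≤ C₃ * f t) →
        (∀ t, 0 ≤ t → g' t + (1 / C₂) * g t ≤ 0) →
        (∀ t, 0 ≤ t → 2 * g t * g' t + 2 * h t ^ 2 ≤ 0) →
        (∀ t, 0 ≤ t → lam₁ * g t ^ 2 ≤ h t ^ 2) →
        ∀ t, 0 ≤ t →
          HasDerivWithinAt (fun s => a s + c₁ * (f s * g s) + c₂ * g s ^ 2)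
            (a' t + c₁ * (f' t * g t + f t * g' t) + c₂ * (2 * g t * g' t))
            (Set.Ici 0) t ∧
          a' t + c₁ * (f' t * g t + f t * g' t) + c₂ * (2 * g t * g' t)
            + (2 - ε) * f t ^ 2 + d t * g t + h t ^ 2 ≤ 0 := by
  refine ⟨C₂ * (C₁ + 1), by positivity, 1 + (C₂ * (C₁ + 1) * C₃)^2 / (4 * ε * lam₁), by positivity, ?_⟩
  set c₁ := C₂ * (C₁ + 1) with hc₁def
  set c₂ := 1 + (c₁ * C₃)^2 / (4 * ε * lam₁) with hc₂def
  have hc₁pos : 0 < c₁ := by positivity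
  have hc₂pos : 0 < c₂ := by positivity
  have key : (c₁ * C₃)^2 ≤ 4 * ε * lam₁ * (2 * c₂ - 1) := by
    rw [hc₂def]
    have h4 : (0:ℝ) < 4 * ε * lam₁ := by positivity
    field_simp
    nlinarith [sq_nonneg (c₁ * C₃), h4.le]
  intro a a' f f' g g' d h ha hf hg hapos hfpos hgpos hdpos hhpos hi1 hi2 hi3 hi4 hi5 t ht
  constructor
  · have := ((ha t ht).add (((hf t ht).mul (hg t ht)).const_mul c₁)).add
      (((hg t ht).pow 2).const_mul c₂)
    refine this.congr_deriv ?_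
    ring
  · have hfn := hfpos t ht
    have hgn := hgpos t ht
    have hdn := hdpos t ht
    have hhn := hhpos t ht
    have h1 := mul_le_mul_of_nonneg_right (hi2 t ht) hgn
    have hg'le : g' t ≤ 0 := by
      have := hi3 t ht
      have : (1 / C₂) * g t ≥ 0 := by positivity
      linarith [hi3 t ht]
    have h2 : f t * g' t ≤ 0 := mul_nonpos_of_nonneg_of_nonpos hfn hg'le
    have h3 : c₂ * (2 * g t * g' t) ≤ -(2 * c₂ * h t ^ 2) := by
      nlinarith [hi4 t ht, hc₂pos]
    have hcc : c₁ * (1 / C₂) = C₁ + 1 := by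
      rw [hc₁def]; field_simp
    have hc₂ge : 1 ≤ c₂ := by
      have : (0:ℝ) ≤ (c₁ * C₃)^2 / (4 * ε * lam₁) := by positivity
      rw [hc₂def]; linarith
    have h1' : c₁ * (f' t * g t) ≤ c₁ * C₃ * (f t * g t) - (C₁ + 1) * (d t * g t) := by
      have h4 := mul_le_mul_of_nonneg_left h1 hc₁pos.le
      have e : c₁ * (1 / C₂) * (d t * g t) = (C₁ + 1) * (d t * g t) := by rw [hcc]
      linarith [h4, e]
    have hP := hi5 t ht
    have step : c₁ * C₃ * (f t * g t) ≤ ε * f t ^ 2 + (2 * c₂ - 1) * h t ^ 2 := by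
      nlinarith [sq_nonneg (2 * ε * f t - c₁ * C₃ * g t),
        mul_le_mul_of_nonneg_left hP (sq_nonneg (c₁ * C₃)),
        mul_le_mul_of_nonneg_right key (sq_nonneg (g t)),
        mul_le_mul_of_nonneg_left hP (by nlinarith : (0:ℝ) ≤ 4 * ε * (2 * c₂ - 1)),
        hε, hlam, sq_nonneg (f t), sq_nonneg (g t), sq_nonneg (h t),
        mul_pos hε hlam]
    have h2' : c₁ * (f t * g' t) ≤ 0 :=
      mul_nonpos_of_nonneg_of_nonpos hc₁pos.le h2
    linarith [hi1 t ht, h1', h2', h3, step]
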